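/- The limiting marginal of the transformed joint distribution satisfies lim_{x→∞} ℌ_{α,F,G,C}(x, y) = E[∂₁C(F_α(N), G(y))] and lim_{y→∞ (componentwise)} ℌ_{α,F,G,C}(x, y) = F(x). -/

import Mathlib

open MeasureTheory Set Filter

/-- `F(n-1)` with the convention `F(-1) = 0`. -/
noncomputable def Fm (F : ℕ → ℝ) : ℕ → ℝ := fun n => if n = 0 then 0 else F (n - 1)

/-- `F_α(n) = (1-α) F(n-1) + α F(n)`. -/
noncomputable def Falpha (α : ℝ) (F : ℕ → ℝ) (n : ℕ) : ℝ :=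
  (1 - α) * Fm F n + α * F n

/-- `⌈u⌉_{α,F} = Σ_{n ≥ 0} F_α(n) · 1_{(F(n-1), F(n)]}(u)`, with `⌈0⌉ = 0` automatic. -/
noncomputable def ceilT (α : ℝ) (F : ℕ → ℝ) (u : ℝ) : ℝ :=
  ∑' n : ℕ, Falpha α F n * Set.indicator (Set.Ioc (Fm F n) (F n)) (fun _ => (1 : ℝ)) u

/-- `𝔔_{α,F,C}(u,v) = ∫_{[0,u]×[0,v]} c(⌈s⌉_{α,F}, t) dλ^{d+1}(s,t)`,
the distribution function of the transformed density. -/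
noncomputable def Qbox (d : ℕ) (α : ℝ) (F : ℕ → ℝ) (c : ℝ → (Fin d → ℝ) → ℝ)
    (u : ℝ) (v : Fin d → ℝ) : ℝ :=
  ∫ p in (Set.Icc (0 : ℝ) u) ×ˢ (Set.Icc (0 : Fin d → ℝ) v), c (ceilT α F p.1) p.2

section helpers

variable {F : ℕ → ℝ}

lemma fm_nonneg (hF0 : ∀ n, 0 ≤ F n) (n : ℕ) : 0 ≤ Fm F n := by
  unfold Fm; split
  · exact le_refl 0
  · exact hF0 _

lemma fm_le (hmono : Monotone F) (hF0 : ∀ n, 0 ≤ F n) (n : ℕ) : Fm F n ≤ F n := by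
  unfold Fm; split
  · exact hF0 _
  · exact hmono (Nat.sub_le n 1)

lemma fm_le_one (hF1 : ∀ n, F n ≤ 1) (n : ℕ) : Fm F n ≤ 1 := by
  unfold Fm; split
  · exact zero_le_one
  · exact hF1 _

lemma falpha_mem {α : ℝ} (hα : α ∈ Set.Ioc (0 : ℝ) 1)
    (hmono : Monotone F) (hF0 : ∀ n, 0 ≤ F n) (hF1 : ∀ n, F n ≤ 1) (n : ℕ) :
    Falpha α F n ∈ Set.Icc (0 : ℝ) 1 := by
  obtain ⟨hα0, hα1⟩ := hα
  have h1 := fm_nonneg hF0 n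
  have h2 := fm_le_one hF1 n
  have h3 := hF0 n
  have h4 := hF1 n
  constructor
  · have := mul_nonneg (by linarith : (0:ℝ) ≤ 1 - α) h1
    have := mul_nonneg hα0.le h3
    unfold Falpha; linarith
  · have := mul_le_mul_of_nonneg_left h2 (by linarith : (0:ℝ) ≤ 1 - α)
    have := mul_le_mul_of_nonneg_left h4 hα0.le
    unfold Falpha; linarith

lemma le_fm_of_lt (hmono : Monotone F) {i j : ℕ} (h : i < j) : F i ≤ Fm F j := by
  unfold Fm; split
  · omega
  · exact hmono (by omega)

lemma ceil_eq {α : ℝ} (hmono : Monotone F) {n : ℕ} {s : ℝ}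
    (hs : s ∈ Set.Ioc (Fm F n) (F n)) : ceilT α F s = Falpha α F n := by
  unfold ceilT
  rw [tsum_eq_single n]
  · rw [Set.indicator_of_mem hs, mul_one]
  · intro k hk
    have : s ∉ Set.Ioc (Fm F k) (F k) := by
      rcases lt_or_gt_of_ne hk with h | h
      · intro hmem
        have h1 : F k ≤ Fm F n := le_fm_of_lt hmono h
        exact absurd hmem.2 (by linarith [hs.1])
      · intro hmem
        have h1 : F n ≤ Fm F k := le_fm_of_lt hmono h
        exact absurd hmem.1 (by linarith [hs.2])
    rw [Set.indicator_of_notMem this, mul_zero]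

lemma ioc_decomp (hmono : Monotone F) (hF0 : ∀ n, 0 ≤ F n) (m : ℕ) :
    Set.Ioc (0 : ℝ) (F m) = ⋃ n ∈ Finset.range (m + 1), Set.Ioc (Fm F n) (F n) := by
  induction m with
  | zero => simp [Fm]
  | succ m ih =>
    rw [show m + 1 + 1 = (m + 1) + 1 from rfl, Finset.range_add_one]
    rw [Finset.set_biUnion_insert, ← ih]
    have h1 : Fm F (m + 1) = F m := by unfold Fm; simp
    rw [h1, Set.union_comm, Set.Ioc_union_Ioc_eq_Ioc (hF0 m) (hmono (Nat.le_succ m))]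

lemma telescope (hF0 : ∀ n, 0 ≤ F n) (m : ℕ) :
    ∑ n ∈ Finset.range (m + 1), (F n - Fm F n) = F m := by
  induction m with
  | zero => simp [Fm]
  | succ m ih =>
    rw [Finset.sum_range_succ, ih]
    have h1 : Fm F (m + 1) = F m := by unfold Fm; simp
    rw [h1]; ring

end helpers

section key

variable {d : ℕ} {α : ℝ} {F : ℕ → ℝ} {c : ℝ → (Fin d → ℝ) → ℝ}

lemma c_integrable (hc_sec : ∀ u ∈ Set.Icc (0 : ℝ) 1,
      ∫ v in Set.Icc (0 : Fin d → ℝ) 1, c u v = 1)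
    {u : ℝ} (hu : u ∈ Set.Icc (0 : ℝ) 1) :
    IntegrableOn (c u) (Set.Icc (0 : Fin d → ℝ) 1) := by
  by_contra h
  have := hc_sec u hu
  rw [integral_undef h] at this
  norm_num at this

lemma qbox_eq (hmono : Monotone F) (hF0 : ∀ n, 0 ≤ F n) (hF1 : ∀ n, F n ≤ 1)
    (hc_int : IntegrableOn (fun p : ℝ × (Fin d → ℝ) => c (ceilT α F p.1) p.2)
      ((Set.Icc (0 : ℝ) 1) ×ˢ (Set.Icc (0 : Fin d → ℝ) 1)))
    (m : ℕ) {v : Fin d → ℝ} (hv : v ≤ 1) :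
    Qbox d α F c (F m) v
      = ∑ n ∈ Finset.range (m + 1),
          (∫ t in Set.Icc (0 : Fin d → ℝ) v, c (Falpha α F n) t) * (F n - Fm F n) := by
  have hBsub : Set.Icc (0 : Fin d → ℝ) v ⊆ Set.Icc 0 1 :=
    fun x hx => ⟨hx.1, le_trans hx.2 hv⟩
  set B := Set.Icc (0 : Fin d → ℝ) v with hB
  have hstep1 : ((Set.Icc (0 : ℝ) (F m)) ×ˢ B : Set (ℝ × (Fin d → ℝ))) =ᵐ[volume]
      (Set.Ioc (0 : ℝ) (F m)) ×ˢ B := by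
    rw [MeasureTheory.ae_eq_set]
    constructor
    · apply measure_mono_null (t := ({0} : Set ℝ) ×ˢ (Set.univ : Set (Fin d → ℝ)))
      · rintro ⟨s, t⟩ ⟨⟨⟨hs0, hs1⟩, ht⟩, hns⟩
        have : s = 0 := by
          by_contra hne
          exact hns ⟨⟨lt_of_le_of_ne hs0 (Ne.symm hne), hs1⟩, ht⟩
        exact ⟨this, trivial⟩
      · rw [Measure.volume_eq_prod, Measure.prod_prod]
        simp
    · have h0 : ((Set.Ioc (0 : ℝ) (F m)) ×ˢ B) \ ((Set.Icc (0 : ℝ) (F m)) ×ˢ B) = ∅ :=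
        Set.diff_eq_empty.2 (Set.prod_mono Set.Ioc_subset_Icc_self subset_rfl)
      rw [h0]; simp
  unfold Qbox
  rw [setIntegral_congr_set hstep1]
  have hset : ((Set.Ioc (0 : ℝ) (F m)) ×ˢ B : Set (ℝ × (Fin d → ℝ)))
      = ⋃ n ∈ Finset.range (m + 1), (Set.Ioc (Fm F n) (F n)) ×ˢ B := by
    rw [ioc_decomp hmono hF0 m]
    ext p
    simp only [Set.mem_prod, Set.mem_iUnion]
    tauto
  rw [hset, integral_biUnion_finset]
  · apply Finset.sum_congr rfl
    intro n _
    have hEq : Set.EqOn (fun p : ℝ × (Fin d → ℝ) => c (ceilT α F p.1) p.2)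
        (fun p : ℝ × (Fin d → ℝ) => c (Falpha α F n) p.2)
        ((Set.Ioc (Fm F n) (F n)) ×ˢ B) := by
      rintro ⟨s, t⟩ ⟨hs, _⟩
      simp only
      rw [ceil_eq hmono hs]
    rw [setIntegral_congr_fun (measurableSet_Ioc.prod measurableSet_Icc) hEq]
    rw [Measure.volume_eq_prod, ← Measure.prod_restrict, integral_fun_snd]
    rw [measureReal_restrict_apply_univ, Real.volume_real_Ioc, max_eq_left
      (by linarith [fm_le hmono hF0 n] : (0:ℝ) ≤ F n - Fm F n)]
    rw [smul_eq_mul, mul_comm]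
  · intro n _
    exact (measurableSet_Ioc.prod measurableSet_Icc)
  · intro i _ j _ hij
    apply Set.disjoint_left.2
    rintro ⟨s, t⟩ ⟨hs1, -⟩ ⟨hs2, -⟩
    rcases lt_or_gt_of_ne hij with h | h
    · have := le_fm_of_lt hmono h
      have := hs1.2; have := hs2.1
      simp only at *; linarith
    · have := le_fm_of_lt hmono h
      have := hs2.2; have := hs1.1
      simp only at *; linarith
  · intro n _
    apply hc_int.mono_set
    apply Set.prod_mono _ hBsub
    exact fun x hx => ⟨le_trans (fm_nonneg hF0 n) hx.1.le, le_trans hx.2 (hF1 n)⟩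

end key

section limits

variable {d : ℕ} {c : ℝ → (Fin d → ℝ) → ℝ}

lemma int_nonneg (hc_nonneg : ∀ u v, 0 ≤ c u v) (u : ℝ) (v : Fin d → ℝ) :
    0 ≤ ∫ t in Set.Icc (0 : Fin d → ℝ) v, c u t :=
  setIntegral_nonneg measurableSet_Icc fun t _ => hc_nonneg u t

lemma int_mono (hc_nonneg : ∀ u v, 0 ≤ c u v)
    (hc_sec : ∀ u ∈ Set.Icc (0 : ℝ) 1, ∫ v in Set.Icc (0 : Fin d → ℝ) 1, c u v = 1)
    {u : ℝ} (hu : u ∈ Set.Icc (0 : ℝ) 1) {v v' : Fin d → ℝ} (hvv' : v ≤ v') (hv' : v' ≤ 1) :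
    ∫ t in Set.Icc (0 : Fin d → ℝ) v, c u t ≤ ∫ t in Set.Icc (0 : Fin d → ℝ) v', c u t := by
  apply setIntegral_mono_set
  · exact (c_integrable hc_sec hu).mono_set fun x hx => ⟨hx.1, le_trans hx.2 hv'⟩
  · exact Filter.Eventually.of_forall fun t => hc_nonneg u t
  · exact (Set.Icc_subset_Icc le_rfl hvv').eventuallyLE

lemma int_le_one (hc_nonneg : ∀ u v, 0 ≤ c u v)
    (hc_sec : ∀ u ∈ Set.Icc (0 : ℝ) 1, ∫ v in Set.Icc (0 : Fin d → ℝ) 1, c u v = 1)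
    {u : ℝ} (hu : u ∈ Set.Icc (0 : ℝ) 1) {v : Fin d → ℝ} (hv : v ≤ 1) :
    ∫ t in Set.Icc (0 : Fin d → ℝ) v, c u t ≤ 1 := by
  rw [← hc_sec u hu]
  exact int_mono hc_nonneg hc_sec hu hv le_rfl

lemma tendsto_int_one (hc_nonneg : ∀ u v, 0 ≤ c u v)
    (hc_sec : ∀ u ∈ Set.Icc (0 : ℝ) 1, ∫ v in Set.Icc (0 : Fin d → ℝ) 1, c u v = 1)
    {G : Fin d → ℝ → ℝ} (hGmono : ∀ i, Monotone (G i))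
    (hG : ∀ i x, G i x ∈ Set.Icc (0 : ℝ) 1)
    (hGlim : ∀ i, Tendsto (G i) atTop (nhds 1))
    {u : ℝ} (hu : u ∈ Set.Icc (0 : ℝ) 1) :
    Tendsto (fun k : ℕ => ∫ t in Set.Icc (0 : Fin d → ℝ) (fun i => G i (k : ℝ)), c u t)
      atTop (nhds 1) := by
  set S : ℕ → Set (Fin d → ℝ) := fun k => Set.Icc 0 (fun i => G i (k : ℝ)) with hS
  have hSm : ∀ k, MeasurableSet (S k) := fun _ => measurableSet_Icc
  have hmonoS : Monotone S := fun k l hkl =>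
    Set.Icc_subset_Icc le_rfl fun i => hGmono i (by exact_mod_cast hkl)
  have hUsub : (⋃ k, S k) ⊆ Set.Icc 0 1 :=
    Set.iUnion_subset fun k x hx => ⟨hx.1, le_trans hx.2 fun i => (hG i _).2⟩
  have hint : IntegrableOn (c u) (⋃ k, S k) := (c_integrable hc_sec hu).mono_set hUsub
  have h := tendsto_setIntegral_of_monotone hSm hmonoS hint
  have hPsub : (Set.univ.pi fun _ : Fin d => Set.Ico (0 : ℝ) 1) ⊆ ⋃ k, S k := by
    intro x hx
    simp only [Set.mem_pi, Set.mem_univ, forall_true_left] at hx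
    have hev : ∀ᶠ k : ℕ in atTop, ∀ i, x i < G i (k : ℝ) := by
      rw [eventually_all]
      intro i
      have hti : Tendsto (fun k : ℕ => G i (k : ℝ)) atTop (nhds 1) :=
        (hGlim i).comp tendsto_natCast_atTop_atTop
      exact hti.eventually (eventually_gt_nhds (hx i).2)
    obtain ⟨k, hk⟩ := hev.exists
    exact Set.mem_iUnion.2 ⟨k, ⟨fun i => (hx i).1, fun i => (hk i).le⟩⟩
  have heq : ∫ t in ⋃ k, S k, c u t = 1 := by
    have hae : (⋃ k, S k) =ᵐ[volume] Set.Icc (0 : Fin d → ℝ) 1 := by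
      rw [MeasureTheory.ae_eq_set]
      constructor
      · rw [Set.diff_eq_empty.2 hUsub]; simp
      · apply measure_mono_null
          (t := Set.Icc (0 : Fin d → ℝ) 1 \ Set.univ.pi fun _ : Fin d => Set.Ico (0 : ℝ) 1)
        · exact Set.diff_subset_diff_right hPsub
        · have h1 : volume (Set.Icc (0 : Fin d → ℝ) 1) = 1 := by
            rw [← Set.pi_univ_Icc, volume_pi_pi]
            simp [Real.volume_Icc]
          have h2 : volume (Set.univ.pi fun _ : Fin d => Set.Ico (0 : ℝ) 1) = 1 := by
            rw [volume_pi_pi]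
            simp [Real.volume_Ico]
          rw [measure_diff
            (fun x hx => by
              simp only [Set.mem_pi, Set.mem_univ, forall_true_left] at hx
              exact ⟨fun i => (hx i).1, fun i => (hx i).2.le⟩)
            ((MeasurableSet.univ_pi fun _ => measurableSet_Ico).nullMeasurableSet)
            (by rw [h2]; exact ENNReal.one_ne_top)]
          rw [h1, h2, tsub_self]
    rw [setIntegral_congr_set hae]
    exact hc_sec u hu
  rw [heq] at h
  exact h

end limits

/-- limiting marginals of `ℌ_{α,F,G,C}(x,y) = 𝔔_{α,F,C}(F(x), G(y))`:
as `x → ∞`, `ℌ(x,y) → E[∂₁C(F_α(N), G(y))] = Σ_n (∫_{[0,G(y)]} c(F_α(n),·))·P(N=n)`,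
and as `y → ∞` componentwise, `ℌ(x,y) → F(x)`. -/
theorem stmt15 (d : ℕ) (F : ℕ → ℝ) (hmono : Monotone F) (hF0 : ∀ n, 0 ≤ F n)
    (hF1 : ∀ n, F n ≤ 1) (hlim : Tendsto F atTop (nhds 1))
    (α : ℝ) (hα : α ∈ Set.Ioc (0 : ℝ) 1)
    (c : ℝ → (Fin d → ℝ) → ℝ)
    (hc_meas : Measurable (Function.uncurry c))
    (hc_nonneg : ∀ u v, 0 ≤ c u v)
    (hc_sec : ∀ u ∈ Set.Icc (0 : ℝ) 1, ∫ v in Set.Icc (0 : Fin d → ℝ) 1, c u v = 1)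
    (hc_int : IntegrableOn (fun p : ℝ × (Fin d → ℝ) => c (ceilT α F p.1) p.2)
      ((Set.Icc (0 : ℝ) 1) ×ˢ (Set.Icc (0 : Fin d → ℝ) 1)))
    (G : Fin d → ℝ → ℝ) (hGmono : ∀ i, Monotone (G i))
    (hG : ∀ i x, G i x ∈ Set.Icc (0 : ℝ) 1)
    (hGlim : ∀ i, Tendsto (G i) atTop (nhds 1)) :
    (∀ y : Fin d → ℝ,
      Tendsto (fun m : ℕ => Qbox d α F c (F m) (fun i => G i (y i))) atTop
        (nhds (∑' n : ℕ,
          (∫ t in Set.Icc (0 : Fin d → ℝ) (fun i => G i (y i)), c (Falpha α F n) t) *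
            (F n - Fm F n)))) ∧
    (∀ m : ℕ,
      Tendsto (fun y : Fin d → ℝ => Qbox d α F c (F m) (fun i => G i (y i))) atTop
        (nhds (F m))) := by
  have hcn : ∀ n, 0 ≤ F n - Fm F n := fun n => by linarith [fm_le hmono hF0 n]
  constructor
  · intro y
    have hv1 : (fun i => G i (y i)) ≤ 1 := fun i => (hG i (y i)).2
    set a : ℕ → ℝ := fun n =>
      (∫ t in Set.Icc (0 : Fin d → ℝ) (fun i => G i (y i)), c (Falpha α F n) t) *
        (F n - Fm F n) with ha
    have hcsum : Summable (fun n => F n - Fm F n) := by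
      apply summable_of_sum_range_le (c := 1) hcn
      intro k
      cases k with
      | zero => simp
      | succ m => rw [telescope hF0 m]; exact hF1 m
    have hsummable : Summable a := by
      apply Summable.of_nonneg_of_le _ _ hcsum
      · intro n; exact mul_nonneg (int_nonneg hc_nonneg _ _) (hcn n)
      · intro n
        have h1 : ∫ t in Set.Icc (0 : Fin d → ℝ) (fun i => G i (y i)),
            c (Falpha α F n) t ≤ 1 :=
          int_le_one hc_nonneg hc_sec (falpha_mem hα hmono hF0 hF1 n) hv1
        calc a n ≤ 1 * (F n - Fm F n) := mul_le_mul_of_nonneg_right h1 (hcn n)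
        _ = _ := one_mul _
    have heq : (fun m : ℕ => Qbox d α F c (F m) fun i => G i (y i))
        = (fun k => ∑ n ∈ Finset.range k, a n) ∘ (· + 1) :=
      funext fun m => qbox_eq hmono hF0 hF1 hc_int m hv1
    rw [heq]
    exact (hsummable.hasSum.tendsto_sum_nat).comp (tendsto_add_atTop_nat 1)
  · intro m
    set L : (Fin d → ℝ) → ℝ := fun y => ∑ n ∈ Finset.range (m + 1),
      (∫ t in Set.Icc (0 : Fin d → ℝ) (fun i => G i (y i)), c (Falpha α F n) t) *
        (F n - Fm F n) with hL
    have hGle : ∀ y : Fin d → ℝ, (fun i => G i (y i)) ≤ 1 := fun y i => (hG i (y i)).2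
    have hkey : (fun y : Fin d → ℝ => Qbox d α F c (F m) fun i => G i (y i)) = L :=
      funext fun y => qbox_eq hmono hF0 hF1 hc_int m (hGle y)
    have hub : ∀ y, L y ≤ F m := by
      intro y
      rw [hL]
      calc ∑ n ∈ Finset.range (m + 1),
            (∫ t in Set.Icc (0 : Fin d → ℝ) (fun i => G i (y i)), c (Falpha α F n) t) *
              (F n - Fm F n)
          ≤ ∑ n ∈ Finset.range (m + 1), (F n - Fm F n) := by
            apply Finset.sum_le_sum
            intro n _
            have h1 := int_le_one hc_nonneg hc_sec (falpha_mem hα hmono hF0 hF1 n) (hGle y)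
            calc _ ≤ 1 * (F n - Fm F n) := mul_le_mul_of_nonneg_right h1 (hcn n)
            _ = _ := one_mul _
        _ = F m := telescope hF0 m
    have hmonoL : Monotone L := by
      intro y y' hyy'
      apply Finset.sum_le_sum
      intro n _
      apply mul_le_mul_of_nonneg_right _ (hcn n)
      exact int_mono hc_nonneg hc_sec (falpha_mem hα hmono hF0 hF1 n)
        (fun i => hGmono i (hyy' i)) (hGle y')
    have hseq : Tendsto (fun k : ℕ => L (fun _ => (k : ℝ))) atTop (nhds (F m)) := by
      have h2 : Tendsto (fun k : ℕ => ∑ n ∈ Finset.range (m + 1),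
          (∫ t in Set.Icc (0 : Fin d → ℝ) (fun i => G i (k : ℝ)), c (Falpha α F n) t) *
            (F n - Fm F n)) atTop
          (nhds (∑ n ∈ Finset.range (m + 1), 1 * (F n - Fm F n))) := by
        apply tendsto_finset_sum
        intro n _
        exact (tendsto_int_one hc_nonneg hc_sec hGmono hG hGlim
          (falpha_mem hα hmono hF0 hF1 n)).mul_const _
      simp only [one_mul] at h2
      rw [telescope hF0 m] at h2
      exact h2
    rw [hkey, Metric.tendsto_nhds]
    intro ε hε
    obtain ⟨k, hk⟩ := ((Metric.tendsto_nhds.1 hseq) ε hε).exists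
    filter_upwards [Filter.mem_atTop (fun _ => (k : ℝ))] with y hy
    have h1 : L (fun _ => (k : ℝ)) ≤ L y := hmonoL hy
    have h2 : L y ≤ F m := hub y
    rw [Real.dist_eq, abs_lt] at hk ⊢
    exact ⟨by linarith [hk.1], by linarith⟩
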